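/- Suppose there are θ₁ < θ₂ with θ₂ − θ₁ < 2S such that the set of points in [θ₁, θ₁ + 2S) where C attains its maximum M is exactly the interval [θ₁, θ₂]. Then for every integer k ≥ 0, lim_{λ→M⁺} (λ − M)^{k+1} · L^{(k)}(λ) = (−1)^k · k! · (θ₂ − θ₁). -/

import Mathlib

open MeasureTheory Filter Set Topology

lemma aux_hasDeriv (C : ℝ → ℝ) (hC : Continuous C) (M : ℝ) (hCM : ∀ θ, C θ ≤ M)
    (a b : ℝ) (k : ℕ) {l : ℝ} (hl : M < l) :
    HasDerivAt (fun x => ∫ θ in a..b, ((x - C θ) ^ (k + 1))⁻¹)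
      (∫ θ in a..b, (-(k + 1) : ℝ) * ((l - C θ) ^ (k + 2))⁻¹) l := by
  set ε := (l - M) / 2 with hε
  have hεpos : 0 < ε := by simp [hε]; linarith
  have hball : ∀ x ∈ Metric.ball l ε, ∀ θ : ℝ, ε ≤ x - C θ := by
    intro x hx θ
    rw [Metric.mem_ball, Real.dist_eq, abs_lt] at hx
    have := hCM θ
    simp only [hε] at *
    linarith
  have hballpos : ∀ x ∈ Metric.ball l ε, ∀ θ : ℝ, 0 < x - C θ := fun x hx θ =>
    lt_of_lt_of_le hεpos (hball x hx θ)
  have hmem : l ∈ Metric.ball l ε := Metric.mem_ball_self hεpos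
  have key := intervalIntegral.hasDerivAt_integral_of_dominated_loc_of_deriv_le
    (F := fun x θ => ((x - C θ) ^ (k + 1))⁻¹)
    (F' := fun x θ => (-(k + 1) : ℝ) * ((x - C θ) ^ (k + 2))⁻¹)
    (a := a) (b := b) (μ := volume) (x₀ := l) (bound := fun _ => (k + 1 : ℝ) * (ε ^ (k + 2))⁻¹)
    (Metric.ball_mem_nhds l hεpos) ?_ ?_ ?_ ?_ ?_ ?_
  · exact key.2
  · -- hF_meas
    filter_upwards [Metric.ball_mem_nhds l hεpos] with x hx
    exact (Continuous.aestronglyMeasurable (by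
      have : ∀ θ, (x - C θ) ^ (k + 1) ≠ 0 := fun θ =>
        pow_ne_zero _ (ne_of_gt (hballpos x hx θ))
      exact ((continuous_const.sub hC).pow _).inv₀ this)).restrict
  · -- hF_int
    apply Continuous.intervalIntegrable
    have : ∀ θ, (l - C θ) ^ (k + 1) ≠ 0 := fun θ =>
      pow_ne_zero _ (ne_of_gt (hballpos l hmem θ))
    exact ((continuous_const.sub hC).pow _).inv₀ this
  · -- hF'_meas
    exact (Continuous.aestronglyMeasurable (by
      have : ∀ θ, (l - C θ) ^ (k + 2) ≠ 0 := fun θ =>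
        pow_ne_zero _ (ne_of_gt (hballpos l hmem θ))
      exact continuous_const.mul (((continuous_const.sub hC).pow _).inv₀ this))).restrict
  · -- h_bound
    refine ae_of_all _ fun θ _ x hx => ?_
    have h1 : ε ≤ x - C θ := hball x hx θ
    have h2 : 0 < x - C θ := hballpos x hx θ
    rw [norm_mul, norm_neg, norm_inv]
    simp only [Real.norm_eq_abs]
    have : |((x - C θ) ^ (k + 2))| = (x - C θ) ^ (k + 2) := abs_of_pos (by positivity)
    rw [this]
    have hk : |(k + 1 : ℝ)| = (k + 1 : ℝ) := abs_of_pos (by positivity)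
    rw [hk]
    gcongr
  · -- bound integrable
    exact intervalIntegrable_const
  · -- h_diff
    refine ae_of_all _ fun θ _ x hx => ?_
    have h2 : 0 < x - C θ := hballpos x hx θ
    have hne : (x - C θ) ^ (k + 1) ≠ 0 := pow_ne_zero _ (ne_of_gt h2)
    have hd : HasDerivAt (fun y : ℝ => (y - C θ) ^ (k + 1))
        ((k + 1 : ℕ) * (x - C θ) ^ k * 1) x :=
      ((hasDerivAt_id x).sub_const (C θ)).pow (k + 1)
    have := hd.inv hne
    refine this.congr_deriv ?_
    have hx0 : (x - C θ) ≠ 0 := ne_of_gt h2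
    field_simp
    push_cast
    ring

lemma aux_formula (C : ℝ → ℝ) (hC : Continuous C) (M : ℝ) (hCM : ∀ θ, C θ ≤ M)
    (a b : ℝ) (L : ℝ → ℝ) (hL : ∀ l : ℝ, M < l → L l = ∫ θ in a..b, 1 / (l - C θ))
    (k : ℕ) : ∀ l : ℝ, M < l → iteratedDeriv k L l =
      (-1 : ℝ) ^ k * (k.factorial : ℝ) * ∫ θ in a..b, ((l - C θ) ^ (k + 1))⁻¹ := by
  induction k with
  | zero =>
    intro l hl
    simp only [iteratedDeriv_zero, pow_zero, Nat.factorial_zero, Nat.cast_one, one_mul]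
    rw [hL l hl]
    simp [one_div]
  | succ k ih =>
    intro l hl
    rw [iteratedDeriv_succ]
    have hev : iteratedDeriv k L =ᶠ[𝓝 l]
        fun x => (-1 : ℝ) ^ k * (k.factorial : ℝ) * ∫ θ in a..b, ((x - C θ) ^ (k + 1))⁻¹ := by
      filter_upwards [isOpen_Ioi.mem_nhds hl] with x hx
      exact ih x hx
    rw [hev.deriv_eq]
    have hd := (aux_hasDeriv C hC M hCM a b k hl).const_mul
      ((-1 : ℝ) ^ k * (k.factorial : ℝ))
    rw [hd.deriv]
    rw [intervalIntegral.integral_const_mul]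
    rw [show k + 1 + 1 = k + 2 from rfl]
    push_cast [Nat.factorial_succ, pow_succ]
    ring

lemma aux_limit (S : ℝ) (hS : 0 < S) (C : ℝ → ℝ) (hC : Continuous C)
    (hper : Function.Periodic C (2 * S)) (M θ₁ θ₂ : ℝ) (hCM : ∀ θ, C θ ≤ M)
    (hθ12 : θ₁ < θ₂) (hθS : θ₂ - θ₁ < 2 * S)
    (hargmax : {θ | θ ∈ Set.Ico θ₁ (θ₁ + 2 * S) ∧ C θ = M} = Set.Icc θ₁ θ₂) (k : ℕ) :
    Tendsto (fun l : ℝ => ∫ θ in (0:ℝ)..(2*S), ((l - M) / (l - C θ)) ^ (k + 1))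
      (𝓝[>] M) (𝓝 (θ₂ - θ₁)) := by
  set f : ℝ → ℝ := fun θ => if C θ = M then 1 else 0 with hf
  have hCeq : ∀ θ ∈ Set.Icc θ₁ θ₂, C θ = M := by
    intro θ hθ
    have : θ ∈ {θ | θ ∈ Set.Ico θ₁ (θ₁ + 2 * S) ∧ C θ = M} := hargmax ▸ hθ
    exact this.2
  have hCne : ∀ θ ∈ Set.Ioo θ₂ (θ₁ + 2 * S), C θ ≠ M := by
    intro θ hθ hCθ
    have h1 : θ ∈ Set.Ico θ₁ (θ₁ + 2 * S) := ⟨le_of_lt (lt_trans hθ12 hθ.1), hθ.2⟩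
    have : θ ∈ Set.Icc θ₁ θ₂ := hargmax ▸ (show θ ∈ {θ | θ ∈ Set.Ico θ₁ (θ₁ + 2 * S) ∧ C θ = M} from ⟨h1, hCθ⟩)
    exact absurd this.2 (not_le.mpr hθ.1)
  -- f is measurable/integrable
  have hsetm : MeasurableSet {θ : ℝ | C θ = M} := (isClosed_eq hC continuous_const).measurableSet
  have hfind : f = Set.indicator {θ : ℝ | C θ = M} (fun _ => (1:ℝ)) := by
    funext θ; simp [hf, Set.indicator_apply, Set.mem_setOf_eq]
  have hfint : ∀ u v : ℝ, IntervalIntegrable f volume u v := by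
    intro u v
    rw [intervalIntegrable_iff, hfind]
    exact (integrableOn_const measure_Ioc_lt_top.ne).indicator hsetm
  have hfper : Function.Periodic f (2 * S) := by
    intro θ; simp only [hf, hper θ]
  -- ∫ f over one period is θ₂ - θ₁
  have hint : (∫ θ in (0:ℝ)..(2*S), f θ) = θ₂ - θ₁ := by
    have h1 : (∫ θ in (0:ℝ)..(2*S), f θ) = ∫ θ in θ₁..(θ₁ + 2 * S), f θ := by
      have := hfper.intervalIntegral_add_eq 0 θ₁
      simpa using this
    have hsplit : (∫ θ in θ₁..(θ₁ + 2 * S), f θ)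
        = (∫ θ in θ₁..θ₂, f θ) + ∫ θ in θ₂..(θ₁ + 2 * S), f θ :=
      (intervalIntegral.integral_add_adjacent_intervals (hfint _ _) (hfint _ _)).symm
    have h2 : (∫ θ in θ₁..θ₂, f θ) = θ₂ - θ₁ := by
      rw [intervalIntegral.integral_congr (g := fun _ => (1:ℝ))
        (fun θ hθ => by
          rw [Set.uIcc_of_le hθ12.le] at hθ
          simp [hf, hCeq θ hθ])]
      simp
    have h3 : (∫ θ in θ₂..(θ₁ + 2 * S), f θ) = 0 := by
      have hle : θ₂ ≤ θ₁ + 2 * S := by linarith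
      rw [intervalIntegral.integral_of_le hle, integral_Ioc_eq_integral_Ioo,
        setIntegral_congr_fun measurableSet_Ioo (g := fun _ => (0:ℝ))
          (fun θ hθ => by simp [hf, hCne θ hθ])]
      simp
    rw [h1, hsplit, h2, h3, add_zero]
  rw [← hint]
  apply intervalIntegral.tendsto_integral_filter_of_dominated_convergence
    (bound := fun _ => (1:ℝ))
  · -- measurability
    filter_upwards [self_mem_nhdsWithin] with l (hl : M < l)
    have hpos : ∀ θ, 0 < l - C θ := fun θ => by have := hCM θ; linarith
    exact (Continuous.aestronglyMeasurable (by
      exact ((continuous_const.div (continuous_const.sub hC)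
        (fun θ => ne_of_gt (hpos θ))).pow _))).restrict
  · -- bound
    filter_upwards [self_mem_nhdsWithin] with l (hl : M < l)
    refine ae_of_all _ fun θ _ => ?_
    have hpos : 0 < l - C θ := by have := hCM θ; linarith
    have h1 : 0 ≤ (l - M) / (l - C θ) := div_nonneg (by linarith) hpos.le
    have h2 : (l - M) / (l - C θ) ≤ 1 := by
      rw [div_le_one hpos]; have := hCM θ; linarith
    rw [Real.norm_eq_abs, abs_pow, abs_of_nonneg h1]
    calc ((l - M) / (l - C θ)) ^ (k+1) ≤ 1 ^ (k+1) := pow_le_pow_left₀ h1 h2 _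
      _ = 1 := one_pow _
  · exact intervalIntegrable_const
  · -- pointwise limit
    refine ae_of_all _ fun θ _ => ?_
    by_cases hCθ : C θ = M
    · have : f θ = 1 := by simp [hf, hCθ]
      rw [this]
      apply Tendsto.congr' (f₁ := fun _ => (1:ℝ))
      · filter_upwards [self_mem_nhdsWithin] with l (hl : M < l)
        rw [hCθ]
        rw [div_self (by linarith : l - M ≠ 0), one_pow]
      · exact tendsto_const_nhds
    · have hflt : f θ = 0 := by simp [hf, hCθ]
      rw [hflt]
      have hlt : C θ < M := lt_of_le_of_ne (hCM θ) hCθ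
      have hnum : Tendsto (fun l : ℝ => l - M) (𝓝[>] M) (𝓝 0) := by
        have : Tendsto (fun l : ℝ => l - M) (𝓝 M) (𝓝 (M - M)) :=
          (continuous_id.sub continuous_const).tendsto M
        simpa using this.mono_left nhdsWithin_le_nhds
      have hden : Tendsto (fun l : ℝ => l - C θ) (𝓝[>] M) (𝓝 (M - C θ)) :=
        ((continuous_id.sub continuous_const).tendsto M).mono_left nhdsWithin_le_nhds
      have hdiv : Tendsto (fun l : ℝ => (l - M) / (l - C θ)) (𝓝[>] M) (𝓝 0) := by
        have := hnum.div hden (by linarith : M - C θ ≠ 0)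
        simpa [Pi.div_def] using this
      have := hdiv.pow (k + 1)
      simpa using this
theorem stmt4
    (S : ℝ) (hS : 0 < S)
    (C Sg c s : ℝ → ℝ)
    (hC_lip : ∃ K : NNReal, LipschitzWith K C)
    (hSg_lip : ∃ K : NNReal, LipschitzWith K Sg)
    (hC_per : Function.Periodic C (2 * S))
    (hSg_per : Function.Periodic Sg (2 * S))
    (hc_meas : Measurable c) (hs_meas : Measurable s)
    (hc_bdd : ∃ B : ℝ, ∀ θ, |c θ| ≤ B) (hs_bdd : ∃ B : ℝ, ∀ θ, |s θ| ≤ B)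
    (hconv : ∀ᵐ θ ∂(volume : Measure ℝ), HasDerivAt C (-(s θ)) θ ∧ HasDerivAt Sg (c θ) θ ∧
      c θ * C θ + s θ * Sg θ = 1)
    (M : ℝ) (hM : IsGreatest (C '' Set.Icc 0 (2 * S)) M)
    (L F : ℝ → ℝ)
    (hL : ∀ l : ℝ, M < l → L l = ∫ θ in (0:ℝ)..(2*S), 1 / (l - C θ))
    (hF : ∀ l : ℝ, M < l → F l = ∫ θ in (0:ℝ)..(2*S), c θ / (l - C θ))
    (θ₁ θ₂ : ℝ) (hθ12 : θ₁ < θ₂) (hθS : θ₂ - θ₁ < 2 * S)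
    (hargmax : {θ | θ ∈ Set.Ico θ₁ (θ₁ + 2 * S) ∧ C θ = M} = Set.Icc θ₁ θ₂) :
    ∀ k : ℕ, Tendsto (fun l : ℝ => (l - M) ^ (k + 1) * iteratedDeriv k L l) (𝓝[>] M)
      (𝓝 ((-1 : ℝ) ^ k * (k.factorial : ℝ) * (θ₂ - θ₁))) := by
  intro k
  obtain ⟨K, hK⟩ := hC_lip
  have hC : Continuous C := hK.continuous
  have hCM : ∀ θ, C θ ≤ M := by
    intro θ
    obtain ⟨y, hy, hyeq⟩ := hC_per.exists_mem_Ico₀ (by positivity) θ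
    rw [hyeq]
    exact hM.2 ⟨y, Set.Ico_subset_Icc_self hy, rfl⟩
  have hform := aux_formula C hC M hCM 0 (2 * S) L hL k
  have hlim := aux_limit S hS C hC hC_per M θ₁ θ₂ hCM hθ12 hθS hargmax k
  have hmain := hlim.const_mul ((-1 : ℝ) ^ k * (k.factorial : ℝ))
  apply hmain.congr'
  filter_upwards [self_mem_nhdsWithin] with l (hl : M < l)
  rw [hform l hl, ← intervalIntegral.integral_const_mul,
    ← intervalIntegral.integral_const_mul, ← intervalIntegral.integral_const_mul]
  apply intervalIntegral.integral_congr
  intro θ _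
  simp only [div_pow]
  simp only [div_eq_mul_inv]
  ring
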